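/- Let K = ℚ(√2)(t) and let E be the elliptic curve over K given by y² = x³ + ((2t² − 3t)/2)·x² + (t² − t³)·x + (1/8)·t²(t−1)². With P₂ = (t, √2·t(t+1)/4), one has 2·P₂ = ((2t−1)t/2, −√2·t(4t² − 5t + 1)/4) in E(K). -/

import Mathlib

open IntermediateField WeierstrassCurve

/-- The quadratic field `ℚ(√2)`, realized inside `ℝ`. -/
noncomputable abbrev QSqrt2 : IntermediateField ℚ ℝ := ℚ⟮Real.sqrt 2⟯

/-- The field `K = ℚ(√2)(t)` of rational functions over `ℚ(√2)`. -/
noncomputable abbrev Kfield : Type := RatFunc QSqrt2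

/-- `√2` as an element of `K = ℚ(√2)(t)`. -/
noncomputable def sqrt2K : Kfield :=
  RatFunc.C ⟨Real.sqrt 2, IntermediateField.mem_adjoin_simple_self ℚ (Real.sqrt 2)⟩

/-- `t` as an element of `K = ℚ(√2)(t)`. -/
noncomputable def tK : Kfield := RatFunc.X

/-- The elliptic curve `E : y² = x³ + ((2t² − 3t)/2)x² + (t² − t³)x + (1/8)t²(t−1)²`
over `K = ℚ(√2)(t)`. -/
noncomputable def Ecurve : WeierstrassCurve.Affine Kfield :=
  { a₁ := 0
    a₂ := (2 * tK ^ 2 - 3 * tK) / 2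
    a₃ := 0
    a₄ := tK ^ 2 - tK ^ 3
    a₆ := (1 / 8) * tK ^ 2 * (tK - 1) ^ 2 }

noncomputable instance : CharZero Kfield :=
  charZero_of_injective_algebraMap (algebraMap QSqrt2 Kfield).injective

lemma some_congr {F : Type*} [Field F] {W : WeierstrassCurve.Affine F} {x y x' y' : F}
    (hx : x = x') (hy : y = y') (h : W.Nonsingular x y) (h' : W.Nonsingular x' y') :
    WeierstrassCurve.Affine.Point.some _ _ h = WeierstrassCurve.Affine.Point.some _ _ h' := by
  subst hx hy; rfl

lemma sqrt2K_sq : sqrt2K ^ 2 = 2 := by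
  unfold sqrt2K
  rw [← map_pow]
  have : (⟨Real.sqrt 2, IntermediateField.mem_adjoin_simple_self ℚ (Real.sqrt 2)⟩ : QSqrt2) ^ 2 = 2 := by
    ext
    push_cast
    exact Real.sq_sqrt (by norm_num)
  rw [this, map_ofNat]

lemma sqrt2K_ne : sqrt2K ≠ 0 := by
  intro h
  have h2 : (0 : Kfield) = 2 := by rw [← sqrt2K_sq, h]; ring
  exact two_ne_zero h2.symm

lemma tK_ne : tK ≠ 0 := RatFunc.X_ne_zero

lemma tK_add_one_ne : tK + 1 ≠ 0 := by
  have key : (tK + 1 : Kfield) = algebraMap (Polynomial QSqrt2) Kfield (Polynomial.X + 1) := by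
    rw [RingHom.map_add, map_one, RatFunc.algebraMap_X]; rfl
  rw [key]
  apply RatFunc.algebraMap_ne_zero
  intro h
  simpa using congrArg (Polynomial.eval 0) h

open Classical in
/-- `2·P₂ = ((2t−1)t/2, −√2·t(4t² − 5t + 1)/4)` in `E(K)`,
where `P₂ = (t, √2·t(t+1)/4)`. -/
theorem two_smul_P2
    (h2 : Ecurve.Nonsingular tK (sqrt2K * tK * (tK + 1) / 4))
    (h2' : Ecurve.Nonsingular ((2 * tK - 1) * tK / 2)
      (-(sqrt2K * tK * (4 * tK ^ 2 - 5 * tK + 1)) / 4)) :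
    (2 : ℤ) • WeierstrassCurve.Affine.Point.some _ _ h2 =
      WeierstrassCurve.Affine.Point.some _ _ h2' := by
  have ht : tK ≠ 0 := tK_ne
  have ht1 : tK + 1 ≠ 0 := tK_add_one_ne
  have hs : sqrt2K ≠ 0 := sqrt2K_ne
  have hy0 : sqrt2K * tK * (tK + 1) / 4 ≠ 0 := by
    apply div_ne_zero _ (by norm_num)
    exact mul_ne_zero (mul_ne_zero hs ht) ht1
  have hy : sqrt2K * tK * (tK + 1) / 4 ≠ Ecurve.negY tK (sqrt2K * tK * (tK + 1) / 4) := by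
    simp only [WeierstrassCurve.Affine.negY, Ecurve]
    intro h
    exact hy0 (by linear_combination h / 2)
  rw [two_zsmul, WeierstrassCurve.Affine.Point.add_self_of_Y_ne hy]
  have hslope : Ecurve.slope tK tK (sqrt2K * tK * (tK + 1) / 4) (sqrt2K * tK * (tK + 1) / 4)
      = sqrt2K * tK := by
    rw [WeierstrassCurve.Affine.slope_of_Y_ne rfl hy]
    simp only [Ecurve, WeierstrassCurve.Affine.negY]
    rw [div_eq_iff (by intro h; exact hy0 (by linear_combination h / 2))]
    linear_combination (-(tK^3 + tK^2) / 2) * sqrt2K_sq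
  apply some_congr
  · rw [hslope]
    simp only [WeierstrassCurve.Affine.addX, Ecurve]
    field_simp
    linear_combination 2 * tK * sqrt2K_sq
  · rw [hslope]
    simp only [WeierstrassCurve.Affine.addY, WeierstrassCurve.Affine.negAddY,
      WeierstrassCurve.Affine.addX, WeierstrassCurve.Affine.negY, Ecurve]
    field_simp
    linear_combination (-8 * sqrt2K * tK^3) * sqrt2K_sq
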